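/- Let H be an axis-parallel hyperbox in R^j with center o and side lengths a_1,...,a_j. Let ρ_1,...,ρ_j be points such that ρ_i lies on the facet of H orthogonal to the i-th coordinate direction (i.e., the i-th coordinate of ρ_i - o equals a_i/2 in absolute value, and all other coordinates of ρ_i - o are bounded by a_w/2 in absolute value). Then there exists an index l_0 such that the slab {x : |<x - o, u>| ≤ √j · |<ρ_{l_0} - o, u>|}, where u = (ρ_{l_0} - o)/||ρ_{l_0} - o||, contains H; equivalently, every point t of H satisfies |<t - o, ρ_{l_0} - o>| ≤ √j · ||ρ_{l_0} - o||². -/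
import Mathlib


open scoped RealInnerProductSpace

lemma coord_le_norm {j : ℕ} (x : EuclideanSpace ℝ (Fin j)) (l : Fin j) :
    |x l| ≤ ‖x‖ := by
  rw [EuclideanSpace.norm_eq, ← Real.sqrt_sq_eq_abs]
  apply Real.sqrt_le_sqrt
  simp only [Real.norm_eq_abs, sq_abs]
  exact Finset.single_le_sum (f := fun i => x i ^ 2) (fun i _ => sq_nonneg _)
    (Finset.mem_univ l)

/-- Hyperbox Lemma: if `H` is an axis-parallel hyperbox in `ℝ^j` centered at `o`
with side lengths `a_1, …, a_j`, and `ρ_i` is a point on the facet of `H`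
orthogonal to the `i`-th coordinate direction, then some `ρ_{l₀}` satisfies:
every point `t` of `H` has `|⟪t - o, ρ_{l₀} - o⟫| ≤ √j · ‖ρ_{l₀} - o‖²`, i.e. the
slab determined by `ρ_{l₀} - o` amplified by `√j` contains `H`. -/
theorem hyperbox_lemma (j : ℕ) (hj : 0 < j)
    (o : EuclideanSpace ℝ (Fin j)) (a : Fin j → ℝ) (ha : ∀ i, 0 < a i)
    (ρ : Fin j → EuclideanSpace ℝ (Fin j))
    (hincident : ∀ i : Fin j, |ρ i i - o i| = a i / 2)
    (hbound : ∀ i w : Fin j, |ρ i w - o w| ≤ a w / 2) :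
    ∃ l₀ : Fin j, ∀ t : EuclideanSpace ℝ (Fin j),
      (∀ w : Fin j, |t w - o w| ≤ a w / 2) →
      |⟪t - o, ρ l₀ - o⟫| ≤ Real.sqrt j * ‖ρ l₀ - o‖ ^ 2 := by
  haveI : Nonempty (Fin j) := ⟨⟨0, hj⟩⟩
  obtain ⟨l₀, hl₀⟩ := Finite.exists_max a
  refine ⟨l₀, fun t ht => ?_⟩
  have hρ : a l₀ / 2 ≤ ‖ρ l₀ - o‖ := by
    have h1 : |(ρ l₀ - o) l₀| ≤ ‖ρ l₀ - o‖ := coord_le_norm _ _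
    have h2 : (ρ l₀ - o) l₀ = ρ l₀ l₀ - o l₀ := rfl
    rw [h2, hincident l₀] at h1
    exact h1
  have hρ0 : (0:ℝ) ≤ ‖ρ l₀ - o‖ := norm_nonneg _
  have ht' : ‖t - o‖ ≤ Real.sqrt j * ‖ρ l₀ - o‖ := by
    rw [EuclideanSpace.norm_eq]
    simp only [Real.norm_eq_abs, sq_abs]
    have hsum : ∑ i, ((t - o) i) ^ 2 ≤ (j : ℝ) * ‖ρ l₀ - o‖ ^ 2 := by
      calc ∑ i, ((t - o) i) ^ 2 ≤ ∑ _i : Fin j, ‖ρ l₀ - o‖ ^ 2 := by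
            apply Finset.sum_le_sum
            intro i _
            have : |(t - o) i| ≤ ‖ρ l₀ - o‖ := by
              have h3 : (t - o) i = t i - o i := rfl
              rw [h3]
              calc |t i - o i| ≤ a i / 2 := ht i
                _ ≤ a l₀ / 2 := by linarith [hl₀ i]
                _ ≤ ‖ρ l₀ - o‖ := hρ
            calc ((t - o) i) ^ 2 = |(t - o) i| ^ 2 := (sq_abs _).symm
              _ ≤ ‖ρ l₀ - o‖ ^ 2 := by
                  exact pow_le_pow_left₀ (abs_nonneg _) this 2
        _ = (j : ℝ) * ‖ρ l₀ - o‖ ^ 2 := by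
            simp [Finset.sum_const, mul_comm]
    calc Real.sqrt (∑ i, ((t - o) i) ^ 2)
        ≤ Real.sqrt ((j : ℝ) * ‖ρ l₀ - o‖ ^ 2) := Real.sqrt_le_sqrt hsum
      _ = Real.sqrt j * ‖ρ l₀ - o‖ := by
          rw [Real.sqrt_mul (by positivity), Real.sqrt_sq hρ0]
  calc |⟪t - o, ρ l₀ - o⟫| ≤ ‖t - o‖ * ‖ρ l₀ - o‖ := abs_real_inner_le_norm _ _
    _ ≤ (Real.sqrt j * ‖ρ l₀ - o‖) * ‖ρ l₀ - o‖ := by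
        exact mul_le_mul_of_nonneg_right ht' hρ0
    _ = Real.sqrt j * ‖ρ l₀ - o‖ ^ 2 := by ring
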